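/- Let q be a prime power, let n and t be integers with 0 ≤ t ≤ n, and let Y be a nonempty subset of GL(n,q) that is both a t-design and an (n−t)-code. Then for each i ∈ {0,1,…,n−1}: (1/|Y|) · |{(x,y) ∈ Y × Y : rank(x − y) = n − i}| = Σ_{j=i}^{t} (−1)^{j−i} q^{C(j−i,2)} [j choose i]_q [n choose j]_q · ( |Y| / ∏_{k=0}^{j−1}(q^n − q^k) − 1 ), where C(m,2) = m(m−1)/2. -/

import Mathlib

/-- The `q`-analogue `[m]_q = 1 + q + ⋯ + q^{m-1}` of the natural number `m`. -/
def qInt (q m : ℕ) : ℕ := ∑ i ∈ Finset.range m, q ^ i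

/-- The `q`-factorial `[m]_q! = [m]_q [m-1]_q ⋯ [1]_q`. -/
def qFactorial (q m : ℕ) : ℕ := ∏ i ∈ Finset.range m, qInt q (i + 1)

/-- The Gaussian binomial coefficient `[m choose k]_q = [m]_q! / ([k]_q! [m-k]_q!)`. -/
def qBinom (q m k : ℕ) : ℕ := qFactorial q m / (qFactorial q k * qFactorial q (m - k))

/-- A subset `Y` of `GL(n,q)` is a `t`-design if it is transitive on ordered `t`-tuples of
linearly independent vectors of `F_q^n`. -/
def IsTDesignGL (F : Type) [Field F] [Fintype F] (n t : ℕ) (Y : Set (GL (Fin n) F)) : Prop :=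
  ∃ r : ℕ, ∀ a b : Fin t → (Fin n → F), LinearIndependent F a → LinearIndependent F b →
    Nat.card {g : GL (Fin n) F // g ∈ Y ∧
      ∀ m, Matrix.mulVec (g : Matrix (Fin n) (Fin n) F) (a m) = b m} = r

/-- A subset `Y` of `GL(n,q)` is a `d`-code if `rank(x − y) ≥ d` for all distinct `x, y ∈ Y`. -/
def IsDCodeGL (F : Type) [Field F] [Fintype F] (n d : ℕ) (Y : Set (GL (Fin n) F)) : Prop :=
  ∀ x ∈ Y, ∀ y ∈ Y, x ≠ y →
    d ≤ Matrix.rank ((x : Matrix (Fin n) (Fin n) F) - (y : Matrix (Fin n) (Fin n) F))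

/-- Recursive Gaussian binomial. -/
def G (q : ℕ) : ℕ → ℕ → ℕ
  | _, 0 => 1
  | 0, _ + 1 => 0
  | m + 1, k + 1 => q ^ (k + 1) * G q m (k + 1) + G q m k

@[simp] lemma G_zero_right (q m : ℕ) : G q m 0 = 1 := by cases m <;> rfl

lemma G_succ_succ (q m k : ℕ) : G q (m+1) (k+1) = q ^ (k+1) * G q m (k+1) + G q m k := rfl

lemma G_eq_zero {q m k : ℕ} (h : m < k) : G q m k = 0 := by
  induction m generalizing k with
  | zero => cases k with
    | zero => omega
    | succ k => rfl
  | succ m ih =>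
    cases k with
    | zero => omega
    | succ k => rw [G_succ_succ, ih (by omega), ih (by omega)]; simp

@[simp] lemma qFactorial_zero (q : ℕ) : qFactorial q 0 = 1 := rfl

@[simp] lemma G_self (q m : ℕ) : G q m m = 1 := by
  induction m with
  | zero => rfl
  | succ m ih => rw [G_succ_succ, ih, G_eq_zero (by omega)]; ring

lemma qInt_pos {q : ℕ} (m : ℕ) : 0 < qInt q (m + 1) := by
  unfold qInt
  exact Finset.sum_pos' (fun i _ => Nat.zero_le _)
    ⟨0, Finset.mem_range.2 (by omega), by simp⟩

lemma qFactorial_pos (q m : ℕ) : 0 < qFactorial q m := by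
  unfold qFactorial
  exact Finset.prod_pos (fun i _ => qInt_pos i)

lemma qInt_succ_add (q k m : ℕ) :
    qInt q (k + 1 + m) = qInt q (k + 1) + q ^ (k + 1) * qInt q m := by
  unfold qInt
  rw [Finset.sum_range_add, Finset.mul_sum]
  congr 1
  exact Finset.sum_congr rfl fun i _ => (pow_add q (k+1) i)

lemma qFactorial_succ (q m : ℕ) : qFactorial q (m + 1) = qFactorial q m * qInt q (m + 1) := by
  unfold qFactorial; rw [Finset.prod_range_succ]

/-- Key factorial identity for `G`. -/
lemma G_mul_factorial {q m k : ℕ} (h : k ≤ m) :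
    G q m k * (qFactorial q k * qFactorial q (m - k)) = qFactorial q m := by
  induction m generalizing k with
  | zero => interval_cases k; simp
  | succ m ih =>
    cases k with
    | zero => simp
    | succ k =>
      rcases Nat.lt_or_ge m (k+1) with hm | hm
      · have hk : k = m := by omega
        subst hk
        simp
      · have h1 := ih (k := k+1) hm
        have h2 := ih (k := k) (by omega)
        have hsub : m + 1 - (k + 1) = m - k := by omega
        have hsub2 : m - k = (m - (k+1)) + 1 := by omega
        rw [G_succ_succ, hsub, Nat.add_mul, qFactorial_succ q m]
        have e1 : q ^ (k+1) * G q m (k+1) * (qFactorial q (k+1) * qFactorial q (m-k))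
            = q ^ (k+1) * qInt q (m - k) * qFactorial q m := by
          rw [hsub2, qFactorial_succ q (m - (k+1)), ← hsub2]
          calc q ^ (k+1) * G q m (k+1) * (qFactorial q (k+1) *
                (qFactorial q (m-(k+1)) * qInt q (m - k)))
              = (q ^ (k+1) * qInt q (m-k)) * (G q m (k+1) *
                (qFactorial q (k+1) * qFactorial q (m-(k+1)))) := by ring
            _ = q ^ (k+1) * qInt q (m - k) * qFactorial q m := by rw [h1]
        have e2 : G q m k * (qFactorial q (k+1) * qFactorial q (m-k))
            = qInt q (k+1) * qFactorial q m := by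
          rw [qFactorial_succ q k]
          calc G q m k * (qFactorial q k * qInt q (k+1) * qFactorial q (m-k))
              = qInt q (k+1) * (G q m k * (qFactorial q k * qFactorial q (m-k))) := by ring
            _ = qInt q (k+1) * qFactorial q m := by rw [h2]
        have e3 : qInt q (m + 1) = qInt q (k + 1) + q ^ (k+1) * qInt q (m - k) := by
          have h4 : m + 1 = k + 1 + (m - k) := by omega
          rw [h4, qInt_succ_add]
        rw [e1, e2, e3]; ring

lemma qBinom_eq_G {q m k : ℕ} (h : k ≤ m) : qBinom q m k = G q m k := by
  unfold qBinom
  rw [← G_mul_factorial h]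
  exact Nat.mul_div_cancel _ (Nat.mul_pos (qFactorial_pos q k) (qFactorial_pos q (m-k)))

lemma alt_sum (q m : ℕ) :
    ∑ d ∈ Finset.range (m + 2), (-1 : ℝ) ^ d * (q : ℝ) ^ (d.choose 2) * (G q (m+1) d : ℝ) = 0 := by
  rw [Finset.sum_range_succ']
  have h0 : (-1:ℝ)^0 * (q:ℝ)^(Nat.choose 0 2) * (G q (m+1) 0 : ℝ) = 1 := by simp
  rw [h0]
  set A : ℕ → ℝ := fun d => (-1:ℝ)^d * (q:ℝ)^((d+1).choose 2) * (G q m d : ℝ) with hA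
  have hterm : ∀ i ∈ Finset.range (m+1),
      (-1:ℝ)^(i+1) * (q:ℝ)^((i+1).choose 2) * (G q (m+1) (i+1) : ℝ) = A (i+1) - A i := by
    intro i _
    rw [G_succ_succ]
    have hc : (i+2).choose 2 = (i+1).choose 2 + (i+1) := by
      have h5 : (i+2).choose 2 = (i+1).choose 1 + (i+1).choose 2 := Nat.choose_succ_succ (i+1) 1
      rw [Nat.choose_one_right] at h5
      omega
    simp only [hA]
    push_cast
    rw [hc]
    ring
  rw [Finset.sum_congr rfl hterm, Finset.sum_range_sub A]
  have h1 : A (m+1) = 0 := by simp [hA, G_eq_zero (show m < m + 1 by omega)]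
  have h2 : A 0 = 1 := by simp [hA]
  rw [h1, h2]; ring

lemma G_mul_G {q i j s : ℕ} (hij : i ≤ j) (hjs : j ≤ s) :
    G q s j * G q j i = G q s i * G q (s-i) (j-i) := by
  have h1 := G_mul_factorial (q := q) hjs
  have h2 := G_mul_factorial (q := q) hij
  have h3 := G_mul_factorial (q := q) (le_trans hij hjs)
  have h4 := G_mul_factorial (q := q) (show j - i ≤ s - i by omega)
  have h5 : s - i - (j - i) = s - j := by omega
  rw [h5] at h4
  apply Nat.eq_of_mul_eq_mul_right
    (show 0 < qFactorial q i * (qFactorial q (j-i) * qFactorial q (s-j)) from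
      Nat.mul_pos (qFactorial_pos q i) (Nat.mul_pos (qFactorial_pos q _) (qFactorial_pos q _)))
  calc G q s j * G q j i * (qFactorial q i * (qFactorial q (j-i) * qFactorial q (s-j)))
      = G q s j * ((G q j i * (qFactorial q i * qFactorial q (j-i))) * qFactorial q (s-j)) := by
        ring
    _ = G q s j * (qFactorial q j * qFactorial q (s-j)) := by rw [h2]
    _ = qFactorial q s := h1
    _ = G q s i * (qFactorial q i * qFactorial q (s-i)) := h3.symm
    _ = G q s i * (qFactorial q i * (G q (s-i) (j-i) * (qFactorial q (j-i) *
          qFactorial q (s-j)))) := by rw [h4]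
    _ = G q s i * G q (s-i) (j-i) * (qFactorial q i * (qFactorial q (j-i) *
          qFactorial q (s-j))) := by ring

lemma ortho {q : ℕ} {i s t : ℕ} (hst : s ≤ t) :
    ∑ j ∈ Finset.Icc i t, (-1:ℝ)^(j-i) * (q:ℝ)^((j-i).choose 2) * (G q j i : ℝ) * (G q s j : ℝ)
      = if s = i then 1 else 0 := by
  rcases Nat.lt_or_ge s i with hsi | hsi
  · rw [if_neg (by omega)]
    apply Finset.sum_eq_zero
    intro j hj
    rw [Finset.mem_Icc] at hj
    rw [G_eq_zero (show s < j by omega)]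
    simp
  · have hsub : Finset.Icc i s ⊆ Finset.Icc i t := Finset.Icc_subset_Icc_right hst
    rw [← Finset.sum_subset hsub (by
      intro j hj hj2
      rw [Finset.mem_Icc] at hj hj2
      rw [G_eq_zero (show s < j by omega)]
      simp)]
    have hre : ∀ j ∈ Finset.Icc i s,
        (-1:ℝ)^(j-i) * (q:ℝ)^((j-i).choose 2) * (G q j i : ℝ) * (G q s j : ℝ)
        = (G q s i : ℝ) * ((-1:ℝ)^(j-i) * (q:ℝ)^((j-i).choose 2) * (G q (s-i) (j-i) : ℝ)) := by
      intro j hj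
      rw [Finset.mem_Icc] at hj
      have := G_mul_G (q := q) hj.1 hj.2
      have hcast : (G q s j : ℝ) * (G q j i : ℝ) = (G q s i : ℝ) * (G q (s-i) (j-i) : ℝ) := by
        exact_mod_cast congrArg (Nat.cast : ℕ → ℝ) this
      linear_combination ((-1:ℝ)^(j-i) * (q:ℝ)^((j-i).choose 2)) * hcast
    rw [Finset.sum_congr rfl hre, ← Finset.mul_sum]
    rw [← Finset.Ico_add_one_right_eq_Icc, Finset.sum_Ico_eq_sum_range]
    have hidx : ∀ d, (i + d) - i = d := fun d => by omega
    simp only [hidx]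
    rcases Nat.eq_or_lt_of_le hsi with he | hlt
    · subst he
      rw [if_pos rfl]
      simp
    · rw [if_neg (by omega)]
      obtain ⟨u, hu⟩ : ∃ u, s - i = u + 1 := ⟨s - i - 1, by omega⟩
      have hs : s + 1 - i = u + 2 := by omega
      rw [hs, hu, alt_sum q u]
      ring

lemma prod_qInt_mul_factorial {q j m : ℕ} (h : j ≤ m) :
    (∏ k ∈ Finset.range j, qInt q (m - k)) * qFactorial q (m - j) = qFactorial q m := by
  induction j with
  | zero => simp
  | succ j ih =>
    rw [Finset.prod_range_succ]
    have h1 : m - j = (m - (j+1)) + 1 := by omega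
    have h2 : qInt q (m - j) * qFactorial q (m - (j+1)) = qFactorial q (m - j) := by
      rw [h1, qFactorial_succ, ← h1]; ring
    calc (∏ k ∈ Finset.range j, qInt q (m - k)) * qInt q (m - j) * qFactorial q (m - (j+1))
        = (∏ k ∈ Finset.range j, qInt q (m - k)) *
          (qInt q (m - j) * qFactorial q (m - (j+1))) := by ring
      _ = (∏ k ∈ Finset.range j, qInt q (m - k)) * qFactorial q (m - j) := by rw [h2]
      _ = qFactorial q m := ih (by omega)

lemma prod_qInt_eq {q j m : ℕ} (h : j ≤ m) :
    ∏ k ∈ Finset.range j, qInt q (m - k) = G q m j * qFactorial q j := by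
  apply Nat.eq_of_mul_eq_mul_right (qFactorial_pos q (m - j))
  rw [prod_qInt_mul_factorial h, ← G_mul_factorial h]; ring

lemma factor_eq (q : ℕ) {k m : ℕ} (h : k ≤ m) :
    (q:ℝ)^m - (q:ℝ)^k = (q:ℝ)^k * ((q:ℝ) - 1) * (qInt q (m - k) : ℝ) := by
  have hg : (qInt q (m-k) : ℝ) * ((q:ℝ) - 1) = (q:ℝ)^(m-k) - 1 := by
    unfold qInt
    push_cast
    exact geom_sum_mul (q:ℝ) (m-k)
  have hpow : (q:ℝ)^k * (q:ℝ)^(m-k) = (q:ℝ)^m := by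
    rw [← pow_add]
    congr 1
    omega
  linear_combination (-(q:ℝ)^k) * hg - hpow

lemma prod_pow_sub (q : ℕ) {j m : ℕ} (h : j ≤ m) :
    ∏ k ∈ Finset.range j, ((q:ℝ)^m - (q:ℝ)^k)
      = (q:ℝ)^(j.choose 2) * ((q:ℝ) - 1)^j * ∏ k ∈ Finset.range j, (qInt q (m - k) : ℝ) := by
  have : ∀ k ∈ Finset.range j, (q:ℝ)^m - (q:ℝ)^k
      = (q:ℝ)^k * ((q:ℝ) - 1) * (qInt q (m - k) : ℝ) := by
    intro k hk
    rw [Finset.mem_range] at hk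
    exact factor_eq q (by omega)
  rw [Finset.prod_congr rfl this, Finset.prod_mul_distrib, Finset.prod_mul_distrib,
    Finset.prod_pow_eq_pow_sum, Finset.prod_const]
  have hgauss := Finset.sum_range_id_mul_two j
  have hs : ∑ k ∈ Finset.range j, k = j.choose 2 := by
    rw [Nat.choose_two_right]
    omega
  rw [hs, Finset.card_range]

lemma M_eq (q : ℕ) {j m : ℕ} (h : j ≤ m) :
    ∏ k ∈ Finset.range j, ((q:ℝ)^m - (q:ℝ)^k)
      = (G q m j : ℝ) * ∏ k ∈ Finset.range j, ((q:ℝ)^j - (q:ℝ)^k) := by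
  rw [prod_pow_sub q h, prod_pow_sub q (le_refl j)]
  have h1 : ∏ k ∈ Finset.range j, (qInt q (m - k) : ℝ) = (G q m j : ℝ) * (qFactorial q j : ℝ) := by
    exact_mod_cast congrArg (Nat.cast : ℕ → ℝ) (prod_qInt_eq h)
  have h2 : ∏ k ∈ Finset.range j, (qInt q (j - k) : ℝ) = (qFactorial q j : ℝ) := by
    have := prod_qInt_eq (q := q) (le_refl j)
    rw [G_self, one_mul] at this
    exact_mod_cast congrArg (Nat.cast : ℕ → ℝ) this
  rw [h1, h2]
  ring

section Counting

variable {F : Type} [Field F] [Fintype F] [DecidableEq F] {n : ℕ}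

set_option linter.unusedSectionVars false

lemma gl_mulVec_cancel (g : GL (Fin n) F) (w : Fin n → F) :
    Matrix.mulVec ((g⁻¹ : GL (Fin n) F) : Matrix (Fin n) (Fin n) F)
      (Matrix.mulVec (g : Matrix (Fin n) (Fin n) F) w) = w := by
  rw [Matrix.mulVec_mulVec]
  have h : ((g⁻¹ : GL (Fin n) F) : Matrix (Fin n) (Fin n) F) *
      (g : Matrix (Fin n) (Fin n) F) = 1 := by
    exact_mod_cast g.inv_mul
  rw [h, Matrix.one_mulVec]

lemma indep_comp_GL (g : GL (Fin n) F) {j : ℕ} {a : Fin j → Fin n → F}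
    (ha : LinearIndependent F a) :
    LinearIndependent F (fun m => Matrix.mulVec (g : Matrix (Fin n) (Fin n) F) (a m)) := by
  have hker : LinearMap.ker (Matrix.mulVecLin (g : Matrix (Fin n) (Fin n) F)) = ⊥ := by
    rw [LinearMap.ker_eq_bot]
    intro u v huv
    have h1 : Matrix.mulVec (g : Matrix (Fin n) (Fin n) F) u
        = Matrix.mulVec (g : Matrix (Fin n) (Fin n) F) v := by
      simpa [Matrix.mulVecLin_apply] using huv
    have h2 := congrArg (Matrix.mulVec ((g⁻¹ : GL (Fin n) F) : Matrix (Fin n) (Fin n) F)) h1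
    rwa [gl_mulVec_cancel, gl_mulVec_cancel] at h2
  have := ha.map' _ hker
  exact this

open Classical in
lemma card_tuples_mem (W : Submodule F (Fin n → F)) (j : ℕ) :
    Nat.card {a : Fin j → Fin n → F // LinearIndependent F a ∧ ∀ m, a m ∈ W}
      = ∏ k ∈ Finset.range j,
          (Fintype.card F ^ (Module.finrank F W) - Fintype.card F ^ k) := by
  have e : {a : Fin j → Fin n → F // LinearIndependent F a ∧ ∀ m, a m ∈ W}
      ≃ {b : Fin j → W // LinearIndependent F b} :=
    { toFun := fun a => ⟨fun m => ⟨a.1 m, a.2.2 m⟩, by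
        apply LinearIndependent.of_comp W.subtype
        have : (W.subtype ∘ fun m => (⟨a.1 m, a.2.2 m⟩ : W)) = a.1 := by
          funext m; rfl
        rw [this]; exact a.2.1⟩
      invFun := fun b => ⟨fun m => (b.1 m : Fin n → F), by
        constructor
        · have : (fun m => (b.1 m : Fin n → F)) = W.subtype ∘ b.1 := by funext m; rfl
          rw [this]
          exact b.2.map' W.subtype (Submodule.ker_subtype W)
        · exact fun m => (b.1 m).2⟩
      left_inv := fun a => by ext m : 2; rfl
      right_inv := fun b => by ext m : 2; rfl }
  rw [Nat.card_congr e]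
  rcases le_or_gt j (Module.finrank F W) with hj | hj
  · rw [card_linearIndependent hj]
    rw [Finset.prod_range fun k => (Fintype.card F ^ (Module.finrank F W) - Fintype.card F ^ k)]
  · have he : IsEmpty {b : Fin j → W // LinearIndependent F b} := by
      constructor
      intro b
      have := b.2.fintype_card_le_finrank
      rw [Fintype.card_fin] at this
      omega
    rw [Nat.card_of_isEmpty]
    have hmem : Module.finrank F W ∈ Finset.range j := Finset.mem_range.2 hj
    exact (Finset.prod_eq_zero hmem (Nat.sub_self (Fintype.card F ^ Module.finrank F W))).symm

lemma card_indep_tuples {j : ℕ} (hj : j ≤ n) :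
    Nat.card {a : Fin j → Fin n → F // LinearIndependent F a}
      = ∏ k ∈ Finset.range j, (Fintype.card F ^ n - Fintype.card F ^ k) := by
  have hfr : Module.finrank F (Fin n → F) = n := Module.finrank_fin_fun F
  rw [card_linearIndependent (by rw [hfr]; exact hj)]
  rw [hfr, Finset.prod_range fun k => (Fintype.card F ^ n - Fintype.card F ^ k)]

/-- Number of `g ∈ Y` mapping the tuple `a` to `b`. -/
def Nf (Y : Finset (GL (Fin n) F)) {j : ℕ} (a b : Fin j → Fin n → F) : ℕ :=
  (Y.filter (fun g : GL (Fin n) F => ∀ m, Matrix.mulVec (g : Matrix (Fin n) (Fin n) F) (a m) = b m)).card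

/-- `Y` is transitive on independent `j`-tuples. -/
def DesignLevel (Y : Finset (GL (Fin n) F)) (j : ℕ) : Prop :=
  ∃ r : ℕ, ∀ a b : Fin j → Fin n → F, LinearIndependent F a → LinearIndependent F b →
    Nf Y a b = r

lemma designLevel_of_design {t : ℕ} {Y : Finset (GL (Fin n) F)}
    (hdesign : IsTDesignGL F n t ↑Y) : DesignLevel Y t := by
  classical
  obtain ⟨r, hr⟩ := hdesign
  refine ⟨r, fun a b ha hb => ?_⟩
  rw [← hr a b ha hb]
  unfold Nf
  rw [Nat.card_congr (Equiv.subtypeEquivRight (q := fun g => g ∈ Y.filter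
    (fun g : GL (Fin n) F => ∀ m, Matrix.mulVec (g : Matrix (Fin n) (Fin n) F) (a m) = b m))
    (fun g => by simp [Finset.mem_filter]))]
  rw [Nat.card_eq_fintype_card, Fintype.card_coe]

lemma design_step {Y : Finset (GL (Fin n) F)} {j : ℕ} (hjn : j < n)
    (h : DesignLevel Y (j + 1)) : DesignLevel Y j := by
  classical
  obtain ⟨r', hr'⟩ := h
  refine ⟨(Fintype.card F ^ n - Fintype.card F ^ j) * r', fun a b ha hb => ?_⟩
  -- pick a vector outside the span of `a`
  have hspan : Submodule.span F (Set.range a) ≠ ⊤ := by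
    intro hcon
    have h1 : Module.finrank F (Submodule.span F (Set.range a)) = j := by
      rw [finrank_span_eq_card ha, Fintype.card_fin]
    rw [hcon, finrank_top, Module.finrank_fin_fun] at h1
    omega
  obtain ⟨v, hv⟩ : ∃ v, v ∉ Submodule.span F (Set.range a) := by
    by_contra hcon
    push_neg at hcon
    exact hspan (Submodule.eq_top_iff'.2 hcon)
  have ha' : LinearIndependent F (Fin.snoc a v : Fin (j+1) → Fin n → F) :=
    linearIndependent_fin_snoc.2 ⟨ha, hv⟩
  set T : Finset (Fin n → F) :=
    Finset.univ.filter (fun w => w ∉ Submodule.span F (Set.range b)) with hT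
  -- fiberwise count over the image of `v`
  have hmem : ∀ g ∈ Y.filter (fun g : GL (Fin n) F => ∀ m,
      Matrix.mulVec (g : Matrix (Fin n) (Fin n) F) (a m) = b m),
      Matrix.mulVec (g : Matrix (Fin n) (Fin n) F) v ∈ T := by
    intro g hg
    rw [Finset.mem_filter] at hg
    have hgi := indep_comp_GL g ha'
    have hcomp : (fun m => Matrix.mulVec (g : Matrix (Fin n) (Fin n) F) ((Fin.snoc a v : Fin (j+1) → Fin n → F) m))
        = Fin.snoc b (Matrix.mulVec (g : Matrix (Fin n) (Fin n) F) v) := by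
      have h2 := Fin.comp_snoc (Matrix.mulVec (g : Matrix (Fin n) (Fin n) F)) a v
      have h3 : Matrix.mulVec (g : Matrix (Fin n) (Fin n) F) ∘ a = b := funext hg.2
      calc (fun m => Matrix.mulVec (g : Matrix (Fin n) (Fin n) F) ((Fin.snoc a v : Fin (j+1) → Fin n → F) m))
          = Matrix.mulVec (g : Matrix (Fin n) (Fin n) F) ∘ (Fin.snoc a v : Fin (j+1) → Fin n → F) := rfl
        _ = Fin.snoc (Matrix.mulVec (g : Matrix (Fin n) (Fin n) F) ∘ a)
              (Matrix.mulVec (g : Matrix (Fin n) (Fin n) F) v) := h2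
        _ = _ := by rw [h3]
    rw [hcomp] at hgi
    rw [hT, Finset.mem_filter]
    exact ⟨Finset.mem_univ _, (linearIndependent_fin_snoc.1 hgi).2⟩
  have hfib := Finset.card_eq_sum_card_fiberwise hmem
  unfold Nf
  rw [hfib]
  have hfibval : ∀ w ∈ T,
      ((Y.filter (fun g : GL (Fin n) F => ∀ m,
          Matrix.mulVec (g : Matrix (Fin n) (Fin n) F) (a m) = b m)).filter
        (fun g : GL (Fin n) F => Matrix.mulVec (g : Matrix (Fin n) (Fin n) F) v = w)).card
          = r' := by
    intro w hw
    rw [hT, Finset.mem_filter] at hw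
    have hb' : LinearIndependent F (Fin.snoc b w : Fin (j+1) → Fin n → F) :=
      linearIndependent_fin_snoc.2 ⟨hb, hw.2⟩
    rw [Finset.filter_filter]
    rw [← hr' (Fin.snoc a v) (Fin.snoc b w) ha' hb']
    unfold Nf
    congr 1
    apply Finset.filter_congr
    intro g _
    constructor
    · rintro ⟨h1, h2⟩ m
      refine Fin.lastCases ?_ ?_ m
      · simp only [Fin.snoc_last]; exact h2
      · intro m'
        simp only [Fin.snoc_castSucc]
        exact h1 m'
    · intro h1
      constructor
      · intro m'
        have := h1 (Fin.castSucc m')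
        simpa only [Fin.snoc_castSucc] using this
      · have := h1 (Fin.last j)
        simpa only [Fin.snoc_last] using this
  rw [Finset.sum_congr rfl hfibval, Finset.sum_const, smul_eq_mul]
  congr 1
  -- cardinality of the complement of the span
  have hcs : (Finset.univ.filter (fun w => w ∈ Submodule.span F (Set.range b))).card
      = Fintype.card F ^ j := by
    rw [← Fintype.card_subtype]
    have h1 : Fintype.card {w // w ∈ Submodule.span F (Set.range b)}
        = Fintype.card F ^ (Module.finrank F (Submodule.span F (Set.range b))) :=
      Module.card_eq_pow_finrank
    rw [h1, finrank_span_eq_card hb, Fintype.card_fin]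
  have hsplit := Finset.card_filter_add_card_filter_not
    (s := (Finset.univ : Finset (Fin n → F)))
    (p := fun w => w ∈ Submodule.span F (Set.range b))
  have huniv : (Finset.univ : Finset (Fin n → F)).card = Fintype.card F ^ n := by
    rw [Finset.card_univ, Fintype.card_fun, Fintype.card_fin]
  rw [hT]
  omega

lemma design_all {Y : Finset (GL (Fin n) F)} {t : ℕ} (hd : DesignLevel Y t) (htn : t ≤ n) :
    ∀ j ≤ t, DesignLevel Y j := by
  have key : ∀ d j, j + d ≤ n → DesignLevel Y (j + d) → DesignLevel Y j := by
    intro d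
    induction d with
    | zero => intro j _ h; simpa using h
    | succ d ih =>
      intro j hjd h
      have h1 : DesignLevel Y (j + d) := by
        apply design_step (show j + d < n by omega)
        have : j + d + 1 = j + (d + 1) := by omega
        rw [this]
        exact h
      exact ih j (by omega) h1
  intro j hj
  have h2 : j + (t - j) = t := by omega
  apply key (t - j) j (by omega)
  rw [h2]
  exact hd

lemma level_count {Y : Finset (GL (Fin n) F)} {j : ℕ} (hj : j ≤ n) {r : ℕ}
    (hr : ∀ a b : Fin j → Fin n → F, LinearIndependent F a → LinearIndependent F b →
      Nf Y a b = r) :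
    (∏ k ∈ Finset.range j, (Fintype.card F ^ n - Fintype.card F ^ k)) * r = Y.card := by
  classical
  set a0 : Fin j → Fin n → F := fun m => Pi.basisFun F (Fin n) (Fin.castLE hj m) with ha0def
  have ha0 : LinearIndependent F a0 :=
    (Pi.basisFun F (Fin n)).linearIndependent.comp _ (Fin.castLE_injective hj)
  set L : Finset (Fin j → Fin n → F) :=
    Finset.univ.filter (fun a => LinearIndependent F a) with hL
  have hmem : ∀ g ∈ Y, (fun m => Matrix.mulVec (g : Matrix (Fin n) (Fin n) F) (a0 m)) ∈ L := by
    intro g _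
    rw [hL, Finset.mem_filter]
    exact ⟨Finset.mem_univ _, indep_comp_GL g ha0⟩
  have hfib := Finset.card_eq_sum_card_fiberwise hmem
  have hfibval : ∀ b ∈ L,
      (Y.filter (fun g : GL (Fin n) F =>
        (fun m => Matrix.mulVec (g : Matrix (Fin n) (Fin n) F) (a0 m)) = b)).card = r := by
    intro b hb
    rw [hL, Finset.mem_filter] at hb
    rw [← hr a0 b ha0 hb.2]
    unfold Nf
    congr 1
    apply Finset.filter_congr
    intro g _
    exact funext_iff
  rw [Finset.sum_congr rfl hfibval, Finset.sum_const, smul_eq_mul] at hfib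
  have hcardL : L.card = ∏ k ∈ Finset.range j, (Fintype.card F ^ n - Fintype.card F ^ k) := by
    rw [← card_indep_tuples hj, Nat.card_eq_fintype_card, Fintype.card_subtype]
  rw [← hcardL]
  exact hfib.symm

open Classical in
/-- The number of independent `j`-tuples on which `x` and `y` agree. -/
noncomputable def Tcnt (j : ℕ) (x y : GL (Fin n) F) : ℕ :=
  (Finset.univ.filter (fun a : Fin j → Fin n → F =>
    LinearIndependent F a ∧ ∀ m, Matrix.mulVec (x : Matrix (Fin n) (Fin n) F) (a m)
      = Matrix.mulVec (y : Matrix (Fin n) (Fin n) F) (a m))).card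

lemma sum_Tcnt {Y : Finset (GL (Fin n) F)} {j : ℕ} (hj : j ≤ n) (hD : DesignLevel Y j) :
    ∑ p ∈ Y ×ˢ Y, Tcnt j p.1 p.2 = Y.card * Y.card := by
  classical
  obtain ⟨r, hr⟩ := hD
  rw [Finset.sum_product]
  have hrow : ∀ x ∈ Y, ∑ y ∈ Y, Tcnt j x y = Y.card := by
    intro x _
    set L : Finset (Fin j → Fin n → F) :=
      Finset.univ.filter (fun a => LinearIndependent F a) with hL
    have h1 : ∀ y, Tcnt j x y = ∑ a ∈ L, (if ∀ m,
        Matrix.mulVec (x : Matrix (Fin n) (Fin n) F) (a m)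
          = Matrix.mulVec (y : Matrix (Fin n) (Fin n) F) (a m) then 1 else 0) := by
      intro y
      unfold Tcnt
      rw [← Finset.filter_filter, ← Finset.card_filter]
    rw [Finset.sum_congr rfl (fun y _ => h1 y), Finset.sum_comm]
    have h2 : ∀ a ∈ L, (∑ y ∈ Y, if ∀ m,
        Matrix.mulVec (x : Matrix (Fin n) (Fin n) F) (a m)
          = Matrix.mulVec (y : Matrix (Fin n) (Fin n) F) (a m) then 1 else 0) = r := by
      intro a ha
      rw [hL, Finset.mem_filter] at ha
      rw [← Finset.card_filter]
      rw [← hr a (fun m => Matrix.mulVec (x : Matrix (Fin n) (Fin n) F) (a m)) ha.2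
        (indep_comp_GL x ha.2)]
      unfold Nf
      congr 1
      apply Finset.filter_congr
      intro g _
      exact ⟨fun h m => (h m).symm, fun h m => (h m).symm⟩
    rw [Finset.sum_congr rfl h2, Finset.sum_const, smul_eq_mul]
    have hcardL : L.card = ∏ k ∈ Finset.range j, (Fintype.card F ^ n - Fintype.card F ^ k) := by
      rw [← card_indep_tuples hj, Nat.card_eq_fintype_card, Fintype.card_subtype]
    rw [hcardL]
    exact level_count hj hr
  rw [Finset.sum_congr rfl hrow, Finset.sum_const, smul_eq_mul]

lemma Tcnt_eq (j : ℕ) (x y : GL (Fin n) F) :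
    Tcnt j x y = ∏ k ∈ Finset.range j,
      (Fintype.card F ^ (n - Matrix.rank ((x : Matrix (Fin n) (Fin n) F)
        - (y : Matrix (Fin n) (Fin n) F))) - Fintype.card F ^ k) := by
  classical
  set A : Matrix (Fin n) (Fin n) F := (x : Matrix (Fin n) (Fin n) F)
    - (y : Matrix (Fin n) (Fin n) F) with hA
  set W : Submodule F (Fin n → F) := LinearMap.ker (Matrix.mulVecLin A) with hW
  have hrank : Module.finrank F W = n - Matrix.rank A := by
    have h1 := LinearMap.finrank_range_add_finrank_ker (Matrix.mulVecLin A)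
    rw [Module.finrank_fin_fun] at h1
    have h2 : Matrix.rank A = Module.finrank F (LinearMap.range (Matrix.mulVecLin A)) := rfl
    rw [← hW] at h1
    omega
  have hcond : ∀ (a : Fin j → Fin n → F),
      (∀ m, Matrix.mulVec (x : Matrix (Fin n) (Fin n) F) (a m)
        = Matrix.mulVec (y : Matrix (Fin n) (Fin n) F) (a m)) ↔ (∀ m, a m ∈ W) := by
    intro a
    apply forall_congr'
    intro m
    rw [hW, LinearMap.mem_ker, Matrix.mulVecLin_apply, hA, Matrix.sub_mulVec, sub_eq_zero]
  unfold Tcnt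
  rw [← hrank, ← card_tuples_mem W j, Nat.card_eq_fintype_card, Fintype.card_subtype]
  congr 1
  apply Finset.filter_congr
  intro a _
  rw [hcond a]

end Counting

lemma G_pos {q m k : ℕ} (h : k ≤ m) : 0 < G q m k := by
  have h2 := G_mul_factorial (q := q) h
  have h3 := qFactorial_pos q m
  rcases Nat.eq_zero_or_pos (G q m k) with h0 | h0
  · rw [h0, zero_mul] at h2; omega
  · exact h0

lemma cast_mprod {q : ℕ} (hq : 1 ≤ q) (s j : ℕ) :
    ((∏ k ∈ Finset.range j, (q ^ s - q ^ k) : ℕ) : ℝ)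
      = ∏ k ∈ Finset.range j, ((q:ℝ) ^ s - (q:ℝ) ^ k) := by
  rcases le_or_gt j s with hj | hj
  · rw [Nat.cast_prod]
    apply Finset.prod_congr rfl
    intro k hk
    rw [Finset.mem_range] at hk
    have hks : k ≤ s := by omega
    rw [Nat.cast_sub (Nat.pow_le_pow_right hq hks)]
    push_cast
    ring
  · have h1 : s ∈ Finset.range j := Finset.mem_range.2 hj
    rw [Finset.prod_eq_zero (f := fun k => q ^ s - q ^ k) h1 (Nat.sub_self _),
      Finset.prod_eq_zero (f := fun k => (q:ℝ) ^ s - (q:ℝ) ^ k) h1 (by simp)]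
    norm_num

lemma M_eq' (q : ℕ) (j m : ℕ) :
    ∏ k ∈ Finset.range j, ((q:ℝ)^m - (q:ℝ)^k)
      = (G q m j : ℝ) * ∏ k ∈ Finset.range j, ((q:ℝ)^j - (q:ℝ)^k) := by
  rcases le_or_gt j m with h | h
  · exact M_eq q h
  · have h1 : m ∈ Finset.range j := Finset.mem_range.2 h
    rw [Finset.prod_eq_zero (f := fun k => (q:ℝ)^m - (q:ℝ)^k) h1 (by simp), G_eq_zero h]
    norm_num

lemma mjj_pos {q j : ℕ} (hq : 2 ≤ q) :
    0 < ∏ k ∈ Finset.range j, ((q:ℝ)^j - (q:ℝ)^k) := by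
  apply Finset.prod_pos
  intro k hk
  rw [Finset.mem_range] at hk
  have h1 : (1:ℝ) < (q:ℝ) := by exact_mod_cast (by omega : 1 < q)
  have h2 : (q:ℝ)^k < (q:ℝ)^j := by gcongr <;> assumption
  linarith

/-- The distance distribution of a subset of `GL(n,q)` which is both a `t`-design and an
`(n−t)`-code is uniquely determined: for `0 ≤ i ≤ n−1`,
`A_{n−i} = Σ_{j=i}^{t} (−1)^{j−i} q^{C(j−i,2)} [j choose i]_q [n choose j]_q
(|Y| / ∏_{k=0}^{j−1}(q^n − q^k) − 1)`. -/
theorem statement14 (q : ℕ) (hq : IsPrimePow q) (F : Type) [Field F] [Fintype F]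
    [DecidableEq F] (hF : Fintype.card F = q) (n t : ℕ) (htn : t ≤ n)
    (Y : Finset (GL (Fin n) F)) (hYne : Y.Nonempty)
    (hdesign : IsTDesignGL F n t ↑Y) (hcode : IsDCodeGL F n (n - t) ↑Y)
    (i : ℕ) (hi : i < n) :
    (1 / (Y.card : ℝ)) *
        ((Y ×ˢ Y).filter (fun p =>
          Matrix.rank ((p.1 : Matrix (Fin n) (Fin n) F) - (p.2 : Matrix (Fin n) (Fin n) F))
            = n - i)).card
      = ∑ j ∈ Finset.Icc i t,
          (-1 : ℝ) ^ (j - i) * (q : ℝ) ^ Nat.choose (j - i) 2 *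
            (qBinom q j i : ℝ) * (qBinom q n j : ℝ) *
            ((Y.card : ℝ) / ∏ k ∈ Finset.range j, ((q : ℝ) ^ n - (q : ℝ) ^ k) - 1) := by
  classical
  have hq2 : 2 ≤ q := hq.two_le
  have hcY : 0 < Y.card := Finset.card_pos.2 hYne
  have hcR : (0:ℝ) < (Y.card : ℝ) := by exact_mod_cast hcY
  set c : ℝ := (Y.card : ℝ) with hc
  set sf : GL (Fin n) F × GL (Fin n) F → ℕ := fun p =>
    n - Matrix.rank ((p.1 : Matrix (Fin n) (Fin n) F) - (p.2 : Matrix (Fin n) (Fin n) F))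
    with hsf
  set D : Finset (GL (Fin n) F × GL (Fin n) F) := (Y ×ˢ Y).filter (fun p =>
      Matrix.rank ((p.1 : Matrix (Fin n) (Fin n) F) - (p.2 : Matrix (Fin n) (Fin n) F))
        = n - i) with hD
  -- Step A
  have hA : ∀ j ∈ Finset.Icc i t,
      ∑ p ∈ Y ×ˢ Y, (G q (sf p) j : ℝ)
        = c * c / (∏ k ∈ Finset.range j, ((q:ℝ)^j - (q:ℝ)^k)) := by
    intro j hj
    rw [Finset.mem_Icc] at hj
    have hjn : j ≤ n := le_trans hj.2 htn
    have hDL : DesignLevel Y j := design_all (designLevel_of_design hdesign) htn j hj.2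
    have hsum := sum_Tcnt hjn hDL
    have hmjj := mjj_pos (q := q) (j := j) hq2
    rw [eq_div_iff (ne_of_gt hmjj)]
    have hcast : (∑ p ∈ Y ×ˢ Y, (Tcnt j p.1 p.2 : ℝ)) = c * c := by
      have h1 := congrArg (Nat.cast : ℕ → ℝ) hsum
      push_cast at h1
      exact h1
    rw [Finset.sum_mul]
    rw [← hcast]
    apply Finset.sum_congr rfl
    intro p _
    have e1 : (Tcnt j p.1 p.2 : ℝ)
        = ∏ k ∈ Finset.range j, ((q:ℝ)^(sf p) - (q:ℝ)^k) := by
      rw [Tcnt_eq, hF]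
      exact cast_mprod (by omega) (sf p) j
    rw [e1, M_eq' q j (sf p)]
  -- facts about sf
  have hrank0 : ∀ p : GL (Fin n) F × GL (Fin n) F, p.1 = p.2 →
      Matrix.rank ((p.1 : Matrix (Fin n) (Fin n) F) - (p.2 : Matrix (Fin n) (Fin n) F)) = 0 := by
    intro p hp
    rw [hp, sub_self, Matrix.rank_zero]
  have hrle : ∀ p : GL (Fin n) F × GL (Fin n) F,
      Matrix.rank ((p.1 : Matrix (Fin n) (Fin n) F) - (p.2 : Matrix (Fin n) (Fin n) F)) ≤ n := by
    intro p
    have := Matrix.rank_le_card_width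
      ((p.1 : Matrix (Fin n) (Fin n) F) - (p.2 : Matrix (Fin n) (Fin n) F))
    simpa using this
  have hcode' : ∀ p ∈ Y ×ˢ Y, p.1 ≠ p.2 → sf p ≤ t := by
    intro p hp hne
    rw [Finset.mem_product] at hp
    have h1 := hcode p.1 (Finset.mem_coe.2 hp.1) p.2 (Finset.mem_coe.2 hp.2) hne
    have h2 := hrle p
    have h3 : sf p = n - Matrix.rank ((p.1 : Matrix (Fin n) (Fin n) F)
      - (p.2 : Matrix (Fin n) (Fin n) F)) := rfl
    omega
  -- Step B
  have hB : ∑ p ∈ Y ×ˢ Y, (∑ j ∈ Finset.Icc i t,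
        (-1:ℝ)^(j-i) * (q:ℝ)^((j-i).choose 2) * (G q j i : ℝ) * (G q (sf p) j : ℝ))
      = (D.card : ℝ) + c * (∑ j ∈ Finset.Icc i t,
        (-1:ℝ)^(j-i) * (q:ℝ)^((j-i).choose 2) * (G q j i : ℝ) * (G q n j : ℝ)) := by
    rw [← Finset.sum_filter_add_sum_filter_not (Y ×ˢ Y) (fun p => p.1 = p.2)]
    have hdiagsum : ∑ p ∈ (Y ×ˢ Y).filter (fun p => p.1 = p.2),
        (∑ j ∈ Finset.Icc i t,
          (-1:ℝ)^(j-i) * (q:ℝ)^((j-i).choose 2) * (G q j i : ℝ) * (G q (sf p) j : ℝ))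
        = c * (∑ j ∈ Finset.Icc i t,
          (-1:ℝ)^(j-i) * (q:ℝ)^((j-i).choose 2) * (G q j i : ℝ) * (G q n j : ℝ)) := by
      have hsfn : ∀ p ∈ (Y ×ˢ Y).filter (fun p => p.1 = p.2), sf p = n := by
        intro p hp
        rw [Finset.mem_filter] at hp
        have h3 : sf p = n - Matrix.rank ((p.1 : Matrix (Fin n) (Fin n) F)
          - (p.2 : Matrix (Fin n) (Fin n) F)) := rfl
        have h4 := hrank0 p hp.2
        omega
      rw [Finset.sum_congr rfl (fun p hp => by rw [hsfn p hp])]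
      rw [Finset.sum_const, nsmul_eq_mul]
      congr 1
      rw [hc]
      norm_cast
      apply Finset.card_nbij' (fun p => p.1) (fun x => (x, x))
      · intro p hp
        rw [Finset.mem_coe, Finset.mem_filter, Finset.mem_product] at hp
        exact hp.1.1
      · intro x hx
        rw [Finset.mem_coe, Finset.mem_filter, Finset.mem_product]
        exact ⟨⟨hx, hx⟩, rfl⟩
      · intro p hp
        rw [Finset.mem_coe, Finset.mem_filter] at hp
        exact Prod.ext rfl hp.2
      · intro x hx
        rfl
    have hoffsum : ∑ p ∈ (Y ×ˢ Y).filter (fun p => ¬ p.1 = p.2),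
        (∑ j ∈ Finset.Icc i t,
          (-1:ℝ)^(j-i) * (q:ℝ)^((j-i).choose 2) * (G q j i : ℝ) * (G q (sf p) j : ℝ))
        = (D.card : ℝ) := by
      have hterm : ∀ p ∈ (Y ×ˢ Y).filter (fun p => ¬ p.1 = p.2),
          (∑ j ∈ Finset.Icc i t,
            (-1:ℝ)^(j-i) * (q:ℝ)^((j-i).choose 2) * (G q j i : ℝ) * (G q (sf p) j : ℝ))
          = if sf p = i then (1:ℝ) else 0 := by
        intro p hp
        rw [Finset.mem_filter] at hp
        exact ortho (hcode' p hp.1 hp.2)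
      rw [Finset.sum_congr rfl hterm, Finset.sum_boole]
      congr 1
      rw [Finset.filter_filter, hD]
      congr 1
      apply Finset.filter_congr
      intro p hp
      rw [Finset.mem_product] at hp
      have h2 := hrle p
      have h3 : sf p = n - Matrix.rank ((p.1 : Matrix (Fin n) (Fin n) F)
        - (p.2 : Matrix (Fin n) (Fin n) F)) := rfl
      constructor
      · rintro ⟨hne, hsi⟩
        omega
      · intro hr
        constructor
        · intro heq
          have h4 := hrank0 p heq
          omega
        · omega
    rw [hdiagsum, hoffsum]
    ring
  -- combine
  rw [Finset.sum_comm] at hB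
  have hB2 : ∀ j ∈ Finset.Icc i t,
      ∑ p ∈ Y ×ˢ Y,
        (-1:ℝ)^(j-i) * (q:ℝ)^((j-i).choose 2) * (G q j i : ℝ) * (G q (sf p) j : ℝ)
      = (-1:ℝ)^(j-i) * (q:ℝ)^((j-i).choose 2) * (G q j i : ℝ)
          * (c * c / (∏ k ∈ Finset.range j, ((q:ℝ)^j - (q:ℝ)^k))) := by
    intro j hj
    rw [← hA j hj, Finset.mul_sum]
  rw [Finset.sum_congr rfl hB2] at hB
  -- final arithmetic
  have hfinal : (D.card : ℝ) = c * ∑ j ∈ Finset.Icc i t,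
      (-1 : ℝ) ^ (j - i) * (q : ℝ) ^ Nat.choose (j - i) 2 *
        (qBinom q j i : ℝ) * (qBinom q n j : ℝ) *
        (c / ∏ k ∈ Finset.range j, ((q : ℝ) ^ n - (q : ℝ) ^ k) - 1) := by
    have h3 : (D.card : ℝ) = ∑ j ∈ Finset.Icc i t,
        ((-1:ℝ)^(j-i) * (q:ℝ)^((j-i).choose 2) * (G q j i : ℝ)
          * (c * c / (∏ k ∈ Finset.range j, ((q:ℝ)^j - (q:ℝ)^k)))
        - c * ((-1:ℝ)^(j-i) * (q:ℝ)^((j-i).choose 2) * (G q j i : ℝ) * (G q n j : ℝ))) := by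
      rw [Finset.sum_sub_distrib, ← Finset.mul_sum]
      linarith [hB]
    rw [h3, Finset.mul_sum]
    apply Finset.sum_congr rfl
    intro j hj
    rw [Finset.mem_Icc] at hj
    have hjn : j ≤ n := le_trans hj.2 htn
    rw [qBinom_eq_G hj.1, qBinom_eq_G hjn, M_eq q hjn]
    have hmjj := mjj_pos (q := q) (j := j) hq2
    have hGnj : (0:ℝ) < (G q n j : ℝ) := by exact_mod_cast G_pos hjn
    field_simp
  rw [hfinal]
  field_simp
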